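/- Let W₁ ≥ W₂ be m×m symmetric positive definite matrices, and let X₁, X₂ be symmetric positive definite n×n matrices satisfying X₁ = g_{θ,W₁}(X₁) and X₂ = g_{θ,W₂}(X₂). If the iterates g_{θ,W₁}^k(X) converge to X₁ as k → ∞ for every symmetric positive semidefinite X, then X₁ ≥ X₂, i.e. the fixed point of the modified Riccati operator is monotone in the noise parameter W. (Proposition 1, item 5, second part.) -/

import Mathlib

open Matrix Filter

/-- The modified Riccati operator
`g_{θ,W}(X) = A X Aᵀ + Q − θ A X Cᵀ (C X Cᵀ + W)⁻¹ C X Aᵀ`. -/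
noncomputable def gRic {n m : ℕ} (A Q : Matrix (Fin n) (Fin n) ℝ)
    (C : Matrix (Fin m) (Fin n) ℝ) (W : Matrix (Fin m) (Fin m) ℝ) (θ : ℝ)
    (X : Matrix (Fin n) (Fin n) ℝ) : Matrix (Fin n) (Fin n) ℝ :=
  A * X * Aᵀ + Q - θ • (A * X * Cᵀ * (C * X * Cᵀ + W)⁻¹ * (C * X * Aᵀ))

namespace GRicAux

/-- The auxiliary operator `F(K, X) = A X Aᵀ + Q + θ • (K S Kᵀ + K C X Aᵀ + A X Cᵀ Kᵀ)`
where `S = C X Cᵀ + W`. -/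
noncomputable def F {n m : ℕ} (A Q : Matrix (Fin n) (Fin n) ℝ) (C : Matrix (Fin m) (Fin n) ℝ)
    (W : Matrix (Fin m) (Fin m) ℝ) (θ : ℝ) (K : Matrix (Fin n) (Fin m) ℝ)
    (X : Matrix (Fin n) (Fin n) ℝ) : Matrix (Fin n) (Fin n) ℝ :=
  A * X * Aᵀ + Q + θ • (K * (C * X * Cᵀ + W) * Kᵀ + K * (C * X * Aᵀ) + (A * X * Cᵀ) * Kᵀ)

theorem sym_of_herm {k : ℕ} {M : Matrix (Fin k) (Fin k) ℝ} (h : M.IsHermitian) : Mᵀ = M := by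
  rw [← Matrix.conjTranspose_eq_transpose_of_trivial]; exact h

theorem smul_posSemidef {n : ℕ} {c : ℝ} (hc : 0 ≤ c) {M : Matrix (Fin n) (Fin n) ℝ}
    (hM : M.PosSemidef) : (c • M).PosSemidef := by
  refine Matrix.PosSemidef.of_dotProduct_mulVec_nonneg ?_ fun x => ?_
  · unfold Matrix.IsHermitian
    rw [Matrix.conjTranspose_smul, hM.1]
    simp
  · rw [Matrix.smul_mulVec, dotProduct_smul]
    exact mul_nonneg hc (hM.dotProduct_mulVec_nonneg x)

theorem psd_conj {n m : ℕ} {S : Matrix (Fin m) (Fin m) ℝ} (hS : S.PosSemidef)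
    (B : Matrix (Fin n) (Fin m) ℝ) : (B * S * Bᵀ).PosSemidef := by
  have := hS.mul_mul_conjTranspose_same B
  rwa [Matrix.conjTranspose_eq_transpose_of_trivial] at this

theorem F_sub_g {n m : ℕ} (A Q : Matrix (Fin n) (Fin n) ℝ) (C : Matrix (Fin m) (Fin n) ℝ)
    (W : Matrix (Fin m) (Fin m) ℝ) (θ : ℝ) (K : Matrix (Fin n) (Fin m) ℝ)
    (X : Matrix (Fin n) (Fin n) ℝ) (hX : Xᵀ = X)
    (hSsym : (C * X * Cᵀ + W)ᵀ = C * X * Cᵀ + W)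
    (hS : IsUnit (C * X * Cᵀ + W).det) :
    F A Q C W θ K X - gRic A Q C W θ X =
      θ • ((K + A * X * Cᵀ * (C * X * Cᵀ + W)⁻¹) * (C * X * Cᵀ + W) *
        (K + A * X * Cᵀ * (C * X * Cᵀ + W)⁻¹)ᵀ) := by
  set S := C * X * Cᵀ + W with hSdef
  set M := A * X * Cᵀ with hMdef
  have hMT : Mᵀ = C * X * Aᵀ := by
    simp [hMdef, Matrix.transpose_mul, Matrix.mul_assoc, hX]
  have hinvT : (S⁻¹)ᵀ = S⁻¹ := by rw [Matrix.transpose_nonsing_inv, hSsym]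
  have h1 : S * S⁻¹ = 1 := Matrix.mul_nonsing_inv _ hS
  have h2 : S⁻¹ * S = 1 := Matrix.nonsing_inv_mul _ hS
  have key : (K + M * S⁻¹) * S * (K + M * S⁻¹)ᵀ
      = K * S * Kᵀ + K * (C * X * Aᵀ) + M * Kᵀ + M * S⁻¹ * (C * X * Aᵀ) := by
    rw [Matrix.transpose_add, Matrix.transpose_mul, hinvT, hMT]
    rw [Matrix.add_mul K (M * S⁻¹) S, Matrix.mul_assoc M S⁻¹ S, h2, Matrix.mul_one]
    rw [Matrix.mul_add, Matrix.add_mul, Matrix.add_mul]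
    rw [← Matrix.mul_assoc (K * S) S⁻¹, Matrix.mul_assoc K S S⁻¹, h1, Matrix.mul_one,
      ← Matrix.mul_assoc M S⁻¹]
    abel
  rw [F, gRic, key]
  module

theorem g_eq_F {n m : ℕ} (A Q : Matrix (Fin n) (Fin n) ℝ) (C : Matrix (Fin m) (Fin n) ℝ)
    (W : Matrix (Fin m) (Fin m) ℝ) (θ : ℝ)
    (X : Matrix (Fin n) (Fin n) ℝ) (hX : Xᵀ = X)
    (hSsym : (C * X * Cᵀ + W)ᵀ = C * X * Cᵀ + W)
    (hS : IsUnit (C * X * Cᵀ + W).det) :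
    gRic A Q C W θ X = F A Q C W θ (-(A * X * Cᵀ * (C * X * Cᵀ + W)⁻¹)) X := by
  have h := F_sub_g A Q C W θ (-(A * X * Cᵀ * (C * X * Cᵀ + W)⁻¹)) X hX hSsym hS
  rw [neg_add_cancel] at h
  simp only [Matrix.zero_mul, Matrix.mul_zero, smul_zero] at h
  · exact (sub_eq_zero.mp h).symm

theorem F_W_mono {n m : ℕ} (A Q : Matrix (Fin n) (Fin n) ℝ) (C : Matrix (Fin m) (Fin n) ℝ)
    (W₁ W₂ : Matrix (Fin m) (Fin m) ℝ) (θ : ℝ) (K : Matrix (Fin n) (Fin m) ℝ)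
    (X : Matrix (Fin n) (Fin n) ℝ) :
    F A Q C W₁ θ K X - F A Q C W₂ θ K X = θ • (K * (W₁ - W₂) * Kᵀ) := by
  simp only [F, Matrix.mul_add, Matrix.add_mul, Matrix.mul_sub, Matrix.sub_mul, smul_add, smul_sub]
  module

theorem F_X_mono {n m : ℕ} (A Q : Matrix (Fin n) (Fin n) ℝ) (C : Matrix (Fin m) (Fin n) ℝ)
    (W : Matrix (Fin m) (Fin m) ℝ) (θ : ℝ) (K : Matrix (Fin n) (Fin m) ℝ)
    (X Y : Matrix (Fin n) (Fin n) ℝ) :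
    F A Q C W θ K Y - F A Q C W θ K X =
      (1 - θ) • (A * (Y - X) * Aᵀ) + θ • ((A + K * C) * (Y - X) * (A + K * C)ᵀ) := by
  simp only [F, Matrix.transpose_add, Matrix.transpose_mul, Matrix.mul_add, Matrix.add_mul,
    Matrix.mul_sub, Matrix.sub_mul, smul_add, smul_sub, sub_smul, one_smul, Matrix.mul_assoc]
  module

/-- One-step lemma: if `Y ≥ X₂` then `g_{θ,W₁}(Y) ≥ X₂`. -/
theorem step {n m : ℕ}
    (A Q : Matrix (Fin n) (Fin n) ℝ) (C : Matrix (Fin m) (Fin n) ℝ)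
    (W₁ W₂ : Matrix (Fin m) (Fin m) ℝ) (θ : ℝ)
    (hθ : θ ∈ Set.Ioc (0 : ℝ) 1)
    (hW₁ : W₁.PosDef) (hW₂ : W₂.PosDef) (hW12 : (W₁ - W₂).PosSemidef)
    (X₂ : Matrix (Fin n) (Fin n) ℝ) (hX₂ : X₂.PosDef)
    (hfix₂ : X₂ = gRic A Q C W₂ θ X₂)
    (Y : Matrix (Fin n) (Fin n) ℝ) (hY : (Y - X₂).PosSemidef) :
    (gRic A Q C W₁ θ Y - X₂).PosSemidef := by
  have hθ0 : (0 : ℝ) ≤ θ := le_of_lt hθ.1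
  have hX₂sym : X₂ᵀ = X₂ := sym_of_herm hX₂.isHermitian
  have hYX₂sym : (Y - X₂)ᵀ = Y - X₂ := sym_of_herm hY.isHermitian
  have hYsym : Yᵀ = Y := by
    have h := hYX₂sym
    rw [Matrix.transpose_sub, hX₂sym, sub_eq_sub_iff_sub_eq_sub, sub_self] at h
    exact sub_eq_zero.mp h
  have hYpsd : Y.PosSemidef := by
    have := hY.add hX₂.posSemidef
    rwa [sub_add_cancel] at this
  -- positive definiteness of the two innovation matrices
  have hSY : (C * Y * Cᵀ + W₁).PosDef := Matrix.PosDef.posSemidef_add (psd_conj hYpsd C) hW₁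
  have hS₂ : (C * X₂ * Cᵀ + W₂).PosDef := Matrix.PosDef.posSemidef_add (psd_conj hX₂.posSemidef C) hW₂
  have hSYsym : (C * Y * Cᵀ + W₁)ᵀ = C * Y * Cᵀ + W₁ := sym_of_herm hSY.isHermitian
  have hS₂sym : (C * X₂ * Cᵀ + W₂)ᵀ = C * X₂ * Cᵀ + W₂ := sym_of_herm hS₂.isHermitian
  have hSYdet : IsUnit (C * Y * Cᵀ + W₁).det := hSY.det_pos.ne'.isUnit
  have hS₂det : IsUnit (C * X₂ * Cᵀ + W₂).det := hS₂.det_pos.ne'.isUnit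
  set K : Matrix (Fin n) (Fin m) ℝ := -(A * Y * Cᵀ * (C * Y * Cᵀ + W₁)⁻¹) with hK
  have hg : gRic A Q C W₁ θ Y = F A Q C W₁ θ K Y :=
    g_eq_F A Q C W₁ θ Y hYsym hSYsym hSYdet
  -- three nonnegative pieces
  have h1 : (F A Q C W₁ θ K Y - F A Q C W₁ θ K X₂).PosSemidef := by
    rw [F_X_mono]
    exact (smul_posSemidef (by linarith [hθ.2]) (psd_conj hY A)).add
      (smul_posSemidef hθ0 (psd_conj hY (A + K * C)))
  have h2 : (F A Q C W₁ θ K X₂ - F A Q C W₂ θ K X₂).PosSemidef := by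
    rw [F_W_mono]
    exact smul_posSemidef hθ0 (psd_conj hW12 K)
  have h3 : (F A Q C W₂ θ K X₂ - gRic A Q C W₂ θ X₂).PosSemidef := by
    rw [F_sub_g A Q C W₂ θ K X₂ hX₂sym hS₂sym hS₂det]
    exact smul_posSemidef hθ0 (psd_conj hS₂.posSemidef _)
  have hsum := (h1.add h2).add h3
  have : F A Q C W₁ θ K Y - F A Q C W₁ θ K X₂ + (F A Q C W₁ θ K X₂ - F A Q C W₂ θ K X₂) +
      (F A Q C W₂ θ K X₂ - gRic A Q C W₂ θ X₂) = gRic A Q C W₁ θ Y - X₂ := by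
    rw [hg, ← hfix₂]
    abel
  rwa [this] at hsum

end GRicAux

/-- Proposition 1, item 5, second part: the fixed point of the modified Riccati
operator is monotone in the noise parameter `W`. -/
theorem gRic_fixed_point_monotone_in_W {n m : ℕ}
    (A Q : Matrix (Fin n) (Fin n) ℝ) (C : Matrix (Fin m) (Fin n) ℝ)
    (W₁ W₂ : Matrix (Fin m) (Fin m) ℝ) (θ : ℝ)
    (hQ : Q.PosSemidef) (hθ : θ ∈ Set.Ioc (0 : ℝ) 1)
    (hW₁ : W₁.PosDef) (hW₂ : W₂.PosDef) (hW12 : (W₁ - W₂).PosSemidef)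
    (X₁ X₂ : Matrix (Fin n) (Fin n) ℝ) (hX₁ : X₁.PosDef) (hX₂ : X₂.PosDef)
    (hfix₁ : X₁ = gRic A Q C W₁ θ X₁) (hfix₂ : X₂ = gRic A Q C W₂ θ X₂)
    (hconv : ∀ X : Matrix (Fin n) (Fin n) ℝ, X.PosSemidef →
      Tendsto (fun k => (gRic A Q C W₁ θ)^[k] X) atTop (nhds X₁)) :
    (X₁ - X₂).PosSemidef := by
  have hiter : ∀ k, ((gRic A Q C W₁ θ)^[k] X₂ - X₂).PosSemidef := by
    intro k
    induction k with
    | zero => simpa using Matrix.PosSemidef.zero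
    | succ k ih =>
      rw [Function.iterate_succ_apply']
      exact GRicAux.step A Q C W₁ W₂ θ hθ hW₁ hW₂ hW12 X₂ hX₂ hfix₂ _ ih
  have hten : Tendsto (fun k => (gRic A Q C W₁ θ)^[k] X₂ - X₂) atTop (nhds (X₁ - X₂)) :=
    (hconv X₂ hX₂.posSemidef).sub tendsto_const_nhds
  rw [Matrix.posSemidef_iff_dotProduct_mulVec]
  constructor
  · -- Hermitian: limit of Hermitian matrices
    have hcont : Continuous fun M : Matrix (Fin n) (Fin n) ℝ => Mᴴ :=
      continuous_id.matrix_conjTranspose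
    have h1 : Tendsto (fun k => ((gRic A Q C W₁ θ)^[k] X₂ - X₂)ᴴ) atTop
        (nhds (X₁ - X₂)ᴴ) := (hcont.tendsto _).comp hten
    have h2 : (fun k => ((gRic A Q C W₁ θ)^[k] X₂ - X₂)ᴴ)
        = fun k => (gRic A Q C W₁ θ)^[k] X₂ - X₂ := funext fun k => (hiter k).1
    rw [h2] at h1
    exact tendsto_nhds_unique h1 hten
  · intro x
    have hcont : Continuous fun M : Matrix (Fin n) (Fin n) ℝ =>
        dotProduct (star x) (M *ᵥ x) :=
      continuous_const.dotProduct (continuous_id.matrix_mulVec continuous_const)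
    have h1 : Tendsto (fun k => dotProduct (star x)
          (((gRic A Q C W₁ θ)^[k] X₂ - X₂) *ᵥ x)) atTop
        (nhds (dotProduct (star x) ((X₁ - X₂) *ᵥ x))) := (hcont.tendsto _).comp hten
    exact ge_of_tendsto' h1 fun k => (hiter k).dotProduct_mulVec_nonneg x
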